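/- arXiv:2104.09911 — 3 statements merged into one kernel-verified Lean document; each statement's English description precedes it below -/
import Mathlib

section
/- The map y ↦ ((1+y²)/y)·arctan(y) is strictly increasing on (0, ∞). -/
open Real Set

lemma my_arctan_pos {y : ℝ} (hy : 0 < y) : 0 < arctan y := by
  have := Real.arctan_strictMono hy
  simpa [Real.arctan_zero] using this

lemma my_arctan_lt_self {y : ℝ} (hy : 0 < y) : arctan y < y := by
  have h1 : 0 < arctan y := my_arctan_pos hy
  have h2 : arctan y < π / 2 := Real.arctan_lt_pi_div_two y
  have := Real.lt_tan h1 h2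
  rwa [Real.tan_arctan] at this

theorem stmt_2 :
    StrictMonoOn (fun y : ℝ => ((1 + y ^ 2) / y) * arctan y) (Ioi 0) := by
  have key : ∀ y ∈ Ioi (0:ℝ), HasDerivAt (fun y : ℝ => ((1 + y ^ 2) / y) * arctan y)
      (((2 * y * y - (1 + y ^ 2) * 1) / y ^ 2) * arctan y
        + ((1 + y ^ 2) / y) * (1 / (1 + y ^ 2))) y := by
    intro y hy
    have hy0 : y ≠ 0 := ne_of_gt (mem_Ioi.mp hy)
    have h1 : HasDerivAt (fun y : ℝ => 1 + y ^ 2) (2 * y) y := by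
      simpa using (hasDerivAt_pow 2 y).const_add 1
    have h2 : HasDerivAt (fun y : ℝ => (1 + y ^ 2) / y)
        ((2 * y * y - (1 + y ^ 2) * 1) / y ^ 2) y :=
      h1.div (hasDerivAt_id y) hy0
    exact h2.mul (Real.hasDerivAt_arctan y)
  apply strictMonoOn_of_deriv_pos (convex_Ioi 0)
  · exact fun y hy => ((key y hy).continuousAt).continuousWithinAt
  · intro y hy
    rw [interior_Ioi] at hy
    have hy0 : (0:ℝ) < y := hy
    rw [(key y hy).deriv]
    have h1 : 0 < arctan y := my_arctan_pos hy0
    have h2 : arctan y < y := my_arctan_lt_self hy0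
    have hsq : (0:ℝ) < 1 + y ^ 2 := by positivity
    have heq : ((2 * y * y - (1 + y ^ 2) * 1) / y ^ 2) * arctan y
        + ((1 + y ^ 2) / y) * (1 / (1 + y ^ 2))
        = ((y ^ 2 - 1) * arctan y + y) / y ^ 2 := by
      field_simp
      ring
    rw [heq]
    apply div_pos _ (by positivity)
    nlinarith [mul_pos (mul_pos hy0 hy0) h1]
end

section
/- For every λ < -(c₁+c₂+c₃) with c₁,c₂,c₃ > 0, there exists a unique y > 0 such that ((1+y²)/y)·arctan(y)·(c₁+c₂+c₃) = -λ. -/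
open Real

private noncomputable def gfun (y : ℝ) : ℝ := (y⁻¹ + y) * arctan y

private lemma arctan_lt_self {x : ℝ} (hx : 0 < x) : arctan x < x := by
  have h1 : 0 < arctan x := by rw [← arctan_zero]; exact arctan_strictMono hx
  have h2 := Real.lt_tan h1 (arctan_lt_pi_div_two x)
  rwa [tan_arctan] at h2

private lemma gfun_hasDerivAt {y : ℝ} (hy : 0 < y) :
    HasDerivAt gfun ((1 - y⁻¹ ^ 2) * arctan y + y⁻¹) y := by
  have hy0 : y ≠ 0 := ne_of_gt hy
  have h1 : HasDerivAt (fun y : ℝ => y⁻¹ + y) (-(y ^ 2)⁻¹ + 1) y :=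
    (hasDerivAt_inv hy0).add (hasDerivAt_id y)
  have h := h1.mul (hasDerivAt_arctan y)
  refine h.congr_deriv ?_
  have h2 : (1:ℝ) + y ^ 2 ≠ 0 := by positivity
  field_simp
  ring

private lemma gfun_deriv_pos {y : ℝ} (hy : 0 < y) :
    0 < (1 - y⁻¹ ^ 2) * arctan y + y⁻¹ := by
  have hy0 : y ≠ 0 := ne_of_gt hy
  have key : 0 < (y ^ 2 - 1) * arctan y + y := by
    rcases le_or_gt 1 y with h | h
    · have h1 : (0:ℝ) ≤ y ^ 2 - 1 := by nlinarith
      have h2 : 0 ≤ arctan y := by rw [← arctan_zero]; exact arctan_strictMono.monotone hy.le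
      nlinarith
    · have h1 : arctan y < y := arctan_lt_self hy
      have h2 : y ^ 2 - 1 < 0 := by nlinarith
      nlinarith [mul_lt_mul_of_neg_left h1 h2]
  have e : (1 - y⁻¹ ^ 2) * arctan y + y⁻¹ = ((y ^ 2 - 1) * arctan y + y) / y ^ 2 := by
    field_simp
  rw [e]
  positivity

private lemma gfun_strictMono : StrictMonoOn gfun (Set.Ioi 0) := by
  apply strictMonoOn_of_deriv_pos (convex_Ioi 0)
  · exact fun x hx => ((gfun_hasDerivAt hx).continuousAt).continuousWithinAt
  · intro x hx
    rw [interior_Ioi] at hx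
    rw [(gfun_hasDerivAt hx).deriv]
    exact gfun_deriv_pos hx

theorem stmt_3 (c₁ c₂ c₃ lam : ℝ) (h₁ : 0 < c₁) (h₂ : 0 < c₂) (h₃ : 0 < c₃)
    (hlam : lam < -(c₁ + c₂ + c₃)) :
    ∃! y : ℝ, 0 < y ∧ ((1 + y ^ 2) / y) * arctan y * (c₁ + c₂ + c₃) = -lam := by
  set C := c₁ + c₂ + c₃ with hC
  have hCpos : 0 < C := by positivity
  set t := -lam / C with ht
  have htg : 1 < t := by
    rw [ht, lt_div_iff₀ hCpos]
    linarith
  -- small point a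
  set a := Real.sqrt ((t - 1) / 2) with ha
  have hapos : 0 < a := Real.sqrt_pos.2 (by linarith)
  have ha2 : a ^ 2 = (t - 1) / 2 := Real.sq_sqrt (by linarith)
  have hga : gfun a < t := by
    have h1 : arctan a < a := arctan_lt_self hapos
    have h2 : gfun a < (a⁻¹ + a) * a := by
      apply mul_lt_mul_of_pos_left h1
      positivity
    have h3 : (a⁻¹ + a) * a = 1 + a ^ 2 := by field_simp
    rw [h3, ha2] at h2
    linarith
  -- big point b
  set b := a + 1 + 2 * t with hb
  have hab : a < b := by nlinarith
  have hbpos : 0 < b := lt_trans hapos hab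
  have hb1 : 1 ≤ b := by nlinarith
  have hgb : t < gfun b := by
    have h1 : arctan 1 ≤ arctan b := arctan_strictMono.monotone hb1
    rw [arctan_one] at h1
    have hpi : (1:ℝ) / 2 < π / 4 := by
      have := Real.pi_gt_three
      linarith
    have h2 : (1:ℝ) / 2 < arctan b := lt_of_lt_of_le hpi h1
    have h3 : b * (1 / 2) < b * arctan b := by
      apply mul_lt_mul_of_pos_left h2 hbpos
    have h4 : b * arctan b ≤ (b⁻¹ + b) * arctan b := by
      apply mul_le_mul_of_nonneg_right _ (by linarith)
      have : 0 < b⁻¹ := by positivity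
      linarith
    have h5 : t < b * (1 / 2) := by nlinarith
    calc t < b * (1/2) := h5
      _ < b * arctan b := h3
      _ ≤ gfun b := h4
  -- IVT
  have hcont : ContinuousOn gfun (Set.Icc a b) := by
    intro x hx
    have hxpos : 0 < x := lt_of_lt_of_le hapos hx.1
    exact ((gfun_hasDerivAt hxpos).continuousAt).continuousWithinAt
  have hmem : t ∈ Set.Icc (gfun a) (gfun b) := ⟨hga.le, hgb.le⟩
  obtain ⟨y, hyIcc, hyt⟩ := intermediate_value_Icc hab.le hcont hmem
  have hypos : 0 < y := lt_of_lt_of_le hapos hyIcc.1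
  have key : ∀ z : ℝ, 0 < z → (((1 + z ^ 2) / z) * arctan z * C = -lam ↔ gfun z = t) := by
    intro z hz
    have hz0 : z ≠ 0 := ne_of_gt hz
    have e : (1 + z ^ 2) / z * arctan z = gfun z := by
      unfold gfun
      congr 1
      field_simp
    rw [e, ht, eq_div_iff (ne_of_gt hCpos)]
  refine ⟨y, ⟨hypos, (key y hypos).2 hyt⟩, ?_⟩
  rintro z ⟨hzpos, hzeq⟩
  have hzt : gfun z = t := (key z hzpos).1 hzeq
  exact gfun_strictMono.injOn hzpos hypos (by rw [hzt, hyt])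
end

section
/- If 0 < φ(x) ≤ π for all x > 0 and φ is not identically 0, then ∫₀^∞ [cos(φ(x))·φ(x) - sin(φ(x))]·φ(x) dx < 0, provided φ is continuous, integrable against itself, and strictly positive on a set of positive measure. -/
open Real Set MeasureTheory

lemma key_aux (t : ℝ) (ht : 0 < t) (ht' : t ≤ π) : t * Real.cos t < Real.sin t := by
  have hmono : StrictMonoOn (fun t => Real.sin t - t * Real.cos t) (Icc 0 π) := by
    apply StrictMonoOn.mono (s := Icc 0 π) ?_ (le_refl _)
    apply strictMonoOn_of_deriv_pos (convex_Icc 0 π)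
    · fun_prop
    · intro x hx
      rw [interior_Icc] at hx
      have hd : deriv (fun t => Real.sin t - t * Real.cos t) x = x * Real.sin x := by
        have : HasDerivAt (fun t => Real.sin t - t * Real.cos t)
            (Real.cos x - (1 * Real.cos x + x * (-Real.sin x))) x := by
          exact (Real.hasDerivAt_sin x).sub ((hasDerivAt_id x).mul (Real.hasDerivAt_cos x))
        rw [this.deriv]; ring
      rw [hd]
      exact mul_pos hx.1 (Real.sin_pos_of_pos_of_lt_pi hx.1 hx.2)
  have := hmono (left_mem_Icc.2 Real.pi_pos.le) ⟨ht.le, ht'⟩ ht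
  simp at this
  linarith

lemma integrand_neg (t : ℝ) (ht : 0 < t) (ht' : t ≤ π) :
    (Real.cos t * t - Real.sin t) * t < 0 := by
  have := key_aux t ht ht'
  nlinarith

theorem stmt_6 (φ : ℝ → ℝ) (hcont : ContinuousOn φ (Ioi 0))
    (hpos : ∀ x ∈ Ioi (0 : ℝ), 0 < φ x) (hle : ∀ x ∈ Ioi (0 : ℝ), φ x ≤ π)
    (hint : IntegrableOn (fun x => (Real.cos (φ x) * φ x - Real.sin (φ x)) * φ x) (Ioi 0)) :
    ∫ x in Ioi (0 : ℝ), (Real.cos (φ x) * φ x - Real.sin (φ x)) * φ x < 0 := by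
  set f : ℝ → ℝ := fun x => (Real.cos (φ x) * φ x - Real.sin (φ x)) * φ x with hf
  have hneg : ∀ x ∈ Ioi (0:ℝ), f x < 0 := fun x hx =>
    integrand_neg (φ x) (hpos x hx) (hle x hx)
  have h1 : (0:ℝ) < ∫ x in Ioi (0:ℝ), (-f x) := by
    rw [MeasureTheory.setIntegral_pos_iff_support_of_nonneg_ae]
    · have : (Function.support fun x => -f x) ∩ Ioi 0 = Ioi 0 := by
        ext x
        simp only [Function.mem_support, mem_inter_iff, mem_Ioi, and_iff_right_iff_imp]
        intro hx
        exact fun h => absurd h (by have := hneg x hx; intro h'; linarith)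
      rw [this]
      simp [Real.volume_Ioi]
    · filter_upwards [MeasureTheory.ae_restrict_mem measurableSet_Ioi] with x hx
      have := hneg x hx
      simp only [Pi.zero_apply]
      linarith
    · exact hint.neg
  have h2 : ∫ x in Ioi (0:ℝ), (-f x) = -∫ x in Ioi (0:ℝ), f x := by
    exact MeasureTheory.integral_neg f
  rw [h2] at h1
  linarith
end
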